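/- Let F = {f₁,…,fₙ} ⊂ ℂ[x₁,…,xₙ] be a polynomial system with an isolated singular zero p ∈ ℂⁿ, and assume rank(J(f₁,…,f_s)(p)) = rank(J(F)(p)) = s. For new variables α = (α₁,…,α_s), define h_j = α₁ ∂f₁/∂x_j + ⋯ + α_s ∂f_s/∂x_j + ∂f_{s+1}/∂x_j ∈ ℂ[x,α] for j = 1,…,n, and let G = {f₁,…,fₙ, h₁,…,hₙ}. Then there exists a unique α̂ ∈ ℂ^s such that G(p, α̂) = 0, and moreover (p, α̂) is an isolated zero of the system G = 0 in ℂ^{n+s}. -/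

import Mathlib

open MvPolynomial

/-- The rank over ℂ of the Jacobian matrix of a finite polynomial system, evaluated at `p`. -/
noncomputable def jacRank {n : ℕ} {ι : Type*} [Fintype ι]
    (g : ι → MvPolynomial (Fin n) ℂ) (p : Fin n → ℂ) : ℕ :=
  (Matrix.of fun (i : ι) (j : Fin n) => eval p (pderiv j (g i))).rank

/-- The polynomial `fᵢ ∈ ℂ[x₁,…,xₙ]` viewed inside `ℂ[x₁,…,xₙ,α₁,…,α_s]`, the variables
`x₁,…,xₙ` being the first `n` variables. -/
noncomputable def embX {n : ℕ} (s : ℕ) (g : MvPolynomial (Fin n) ℂ) :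
    MvPolynomial (Fin (n + s)) ℂ :=
  rename (Fin.castAdd s) g

/-- The auxiliary polynomial
`h_j = α₁ ∂f₁/∂x_j + ⋯ + α_s ∂f_s/∂x_j + ∂f_{s+1}/∂x_j ∈ ℂ[x,α]`,
where `α_i` is the `(n+i)`-th variable of `ℂ[x₁,…,xₙ,α₁,…,α_s]`. -/
noncomputable def hPoly {n s : ℕ} (hs : s < n) (f : Fin n → MvPolynomial (Fin n) ℂ)
    (j : Fin n) : MvPolynomial (Fin (n + s)) ℂ :=
  (∑ i : Fin s, X (Fin.natAdd n i) * embX s (pderiv j (f (Fin.castLE hs.le i)))) +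
    embX s (pderiv j (f ⟨s, hs⟩))

lemma eval_embX {n s : ℕ} (q : Fin (n + s) → ℂ) (g : MvPolynomial (Fin n) ℂ) :
    eval q (embX s g) = eval (q ∘ Fin.castAdd s) g := by
  simp [embX, eval_rename]

lemma eval_hPoly {n s : ℕ} (hs : s < n) (f : Fin n → MvPolynomial (Fin n) ℂ)
    (j : Fin n) (q : Fin (n + s) → ℂ) :
    eval q (hPoly hs f j) =
      (∑ i : Fin s, q (Fin.natAdd n i) * eval (q ∘ Fin.castAdd s) (pderiv j (f (Fin.castLE hs.le i)))) +
        eval (q ∘ Fin.castAdd s) (pderiv j (f ⟨s, hs⟩)) := by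
  simp [hPoly, eval_embX]

/-- Let `F = {f₁,…,fₙ} ⊂ ℂ[x₁,…,xₙ]` have an isolated singular zero
`p ∈ ℂⁿ` with `rank J(f₁,…,f_s)(p) = rank J(F)(p) = s`. With new variables
`α = (α₁,…,α_s)` and `h_j = α₁ ∂f₁/∂x_j + ⋯ + α_s ∂f_s/∂x_j + ∂f_{s+1}/∂x_j`, let
`G = {f₁,…,fₙ,h₁,…,hₙ} ⊂ ℂ[x,α]`. Then there is a unique `α̂ ∈ ℂˢ` with `G(p,α̂) = 0`,
and moreover `(p,α̂)` is an isolated zero of `G = 0` in `ℂ^{n+s}`. -/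
theorem augmented_system_unique_isolated_zero {n s : ℕ} (hs : s < n)
    (f : Fin n → MvPolynomial (Fin n) ℂ) (p : Fin n → ℂ)
    (hzero : ∀ i, eval p (f i) = 0)
    (hisolated : ∃ ε > 0, ∀ y : Fin n → ℂ, dist y p < ε → (∀ i, eval y (f i) = 0) → y = p)
    (hsingular : jacRank f p < n)
    (hranks : jacRank (fun i : Fin s => f (Fin.castLE hs.le i)) p = s)
    (hrank : jacRank f p = s) :
    ∃ a : Fin s → ℂ,
      ((∀ i, eval (Fin.append p a) (embX s (f i)) = 0) ∧
        (∀ j, eval (Fin.append p a) (hPoly hs f j) = 0)) ∧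
      (∀ a' : Fin s → ℂ,
        ((∀ i, eval (Fin.append p a') (embX s (f i)) = 0) ∧
          (∀ j, eval (Fin.append p a') (hPoly hs f j) = 0)) → a' = a) ∧
      (∃ ε > 0, ∀ y : Fin (n + s) → ℂ, dist y (Fin.append p a) < ε →
        ((∀ i, eval y (embX s (f i)) = 0) ∧ (∀ j, eval y (hPoly hs f j) = 0)) →
        y = Fin.append p a) := by
  classical
  set r : Fin n → Fin n → ℂ := fun i j => eval p (pderiv j (f i)) with hrdef
  set v : Fin s → Fin n → ℂ := fun i => r (Fin.castLE hs.le i) with hvdef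
  have hvind : LinearIndependent ℂ v := by
    rw [linearIndependent_iff_card_eq_finrank_span]
    unfold jacRank at hranks
    rw [Matrix.rank_eq_finrank_span_row] at hranks
    rw [Fintype.card_fin]; exact hranks.symm
  have hspan : Submodule.span ℂ (Set.range v) = Submodule.span ℂ (Set.range r) := by
    apply Submodule.eq_of_le_of_finrank_eq
    · exact Submodule.span_mono (Set.range_subset_iff.2 fun i => ⟨Fin.castLE hs.le i, rfl⟩)
    · unfold jacRank at hranks hrank
      rw [Matrix.rank_eq_finrank_span_row] at hranks hrank
      have h1 : Module.finrank ℂ (Submodule.span ℂ (Set.range v)) = s := by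
        exact hranks
      have h2 : Module.finrank ℂ (Submodule.span ℂ (Set.range r)) = s := by
        exact hrank
      rw [h1, h2]
  have hmem : r ⟨s, hs⟩ ∈ Submodule.span ℂ (Set.range v) := by
    rw [hspan]; exact Submodule.subset_span ⟨⟨s, hs⟩, rfl⟩
  obtain ⟨c, hc⟩ := (Submodule.mem_span_range_iff_exists_fun ℂ).1 hmem
  set a : Fin s → ℂ := -c with hadef
  -- a is the unique solution of the linear system
  have key : ∀ b : Fin s → ℂ,
      (∀ j, (∑ i, b i * v i j) + r ⟨s, hs⟩ j = 0) → b = a := by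
    intro b hb
    have h1 : ∑ i, b i • v i = - r ⟨s, hs⟩ := by
      funext j
      have := hb j
      simp only [Finset.sum_apply, Pi.smul_apply, smul_eq_mul, Pi.neg_apply]
      linear_combination this
    have hsum : ∑ i, (b i + c i) • v i = 0 := by
      calc ∑ i, (b i + c i) • v i = (∑ i, b i • v i) + ∑ i, c i • v i := by
            rw [← Finset.sum_add_distrib]
            exact Finset.sum_congr rfl fun i _ => add_smul _ _ _
        _ = 0 := by rw [h1, hc]; simp
    funext i
    have h := Fintype.linearIndependent_iff.1 hvind _ hsum i
    have : b i = -c i := eq_neg_of_add_eq_zero_left h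
    simpa [hadef] using this
  have ha : ∀ j, (∑ i, a i * v i j) + r ⟨s, hs⟩ j = 0 := by
    intro j
    have := congrFun hc j
    simp only [Finset.sum_apply, Pi.smul_apply, smul_eq_mul] at this
    simp only [hadef, Pi.neg_apply, neg_mul]
    rw [Finset.sum_neg_distrib, this]
    ring
  -- evaluation of hPoly at (p, b)
  have hevalh : ∀ (b : Fin s → ℂ) (j : Fin n),
      eval (Fin.append p b) (hPoly hs f j) = (∑ i, b i * v i j) + r ⟨s, hs⟩ j := by
    intro b j
    rw [eval_hPoly]
    have hcomp : (Fin.append p b) ∘ Fin.castAdd s = p := funext fun j => Fin.append_left p b j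
    simp [hcomp, Fin.append_right, hvdef, hrdef]
  have hevalf : ∀ (b : Fin s → ℂ) (i : Fin n),
      eval (Fin.append p b) (embX s (f i)) = 0 := by
    intro b i
    rw [eval_embX]
    have hcomp : (Fin.append p b) ∘ Fin.castAdd s = p := funext fun j => Fin.append_left p b j
    rw [hcomp]; exact hzero i
  refine ⟨a, ⟨hevalf a, fun j => by rw [hevalh]; exact ha j⟩, ?_, ?_⟩
  · intro a' ⟨_, ha'⟩
    exact key a' fun j => by rw [← hevalh]; exact ha' j
  · obtain ⟨ε, hε, hiso⟩ := hisolated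
    refine ⟨ε, hε, fun y hy ⟨hy1, hy2⟩ => ?_⟩
    set x : Fin n → ℂ := y ∘ Fin.castAdd s with hxdef
    have hdx : dist x p < ε := by
      refine lt_of_le_of_lt ?_ hy
      rw [dist_pi_le_iff dist_nonneg]
      intro j
      have := dist_le_pi_dist y (Fin.append p a) (Fin.castAdd s j)
      simpa [hxdef, Fin.append_left] using this
    have hx : x = p := hiso x hdx fun i => by
      have := hy1 i; rwa [eval_embX] at this
    set b : Fin s → ℂ := fun i => y (Fin.natAdd n i) with hbdef
    have hb : ∀ j, (∑ i, b i * v i j) + r ⟨s, hs⟩ j = 0 := by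
      intro j
      have := hy2 j
      rw [eval_hPoly] at this
      rw [show y ∘ Fin.castAdd s = p from hx] at this
      simpa [hvdef, hrdef, hbdef] using this
    have hba : b = a := key b hb
    funext z
    cases z using Fin.addCases with
    | left j =>
      rw [Fin.append_left]
      exact congrFun hx j
    | right i =>
      rw [Fin.append_right]
      exact congrFun hba i
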